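/- Let j, k be natural numbers with 0 < j < k and let a₀, a₁, a₂, b₀, b₁, b₂ be real numbers. Consider the Abel equation x' = (a₀ + a₁tʲ + a₂tᵏ)x³ + (b₀ + b₁tʲ + b₂tᵏ)x². Suppose it does not have a center at x = 0 and at least one of the following conditions holds: (1) a₂b₁ − a₁b₂ = 0, or (a₂b₀ − a₀b₂)/(a₂b₁ − a₁b₂) ∉ (−1, 0); (2) a₁b₂ − a₂b₁ = 0, or (a₁b₀ − a₀b₁)/(a₁b₂ − a₂b₁) ∉ (−1, 0); (3) a₀b₂ − a₂b₀ = 0, or (a₀b₁ − a₁b₀)/(a₀b₂ − a₂b₀) ∉ (−1, 0). Then the equation has at most one periodic orbit with nonzero initial condition, and every periodic orbit γ with γ(0) ≠ 0 is hyperbolic. -/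

import Mathlib

/-- `γ : ℝ → ℝ` is a solution of the Abel equation `x' = A(t)x³ + B(t)x²` on `[0,1]`. -/
def IsAbelSolution (A B : ℝ → ℝ) (γ : ℝ → ℝ) : Prop :=
  ∀ t ∈ Set.Icc (0:ℝ) 1,
    HasDerivWithinAt γ (A t * γ t ^ 3 + B t * γ t ^ 2) (Set.Icc (0:ℝ) 1) t

/-- A periodic orbit of the Abel equation: a solution on `[0,1]` with `γ 0 = γ 1`. -/
def IsPeriodicOrbit (A B : ℝ → ℝ) (γ : ℝ → ℝ) : Prop :=
  IsAbelSolution A B γ ∧ γ 0 = γ 1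

/-- A periodic orbit is hyperbolic iff `∫₀¹ (3A(t)γ(t)² + 2B(t)γ(t)) dt ≠ 0`. -/
def IsHyperbolic (A B : ℝ → ℝ) (γ : ℝ → ℝ) : Prop :=
  (∫ t in (0:ℝ)..1, (3 * A t * γ t ^ 2 + 2 * B t * γ t)) ≠ 0

/-- The Abel equation has a center at `x = 0`: all solutions starting close enough
to `0` are defined on all of `[0,1]` and are periodic orbits. -/
def HasCenterAtZero (A B : ℝ → ℝ) : Prop :=
  ∃ ε > (0:ℝ), ∀ ρ : ℝ, |ρ| < ε →
    ∃ γ : ℝ → ℝ, IsAbelSolution A B γ ∧ γ 0 = ρ ∧ γ 0 = γ 1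

open Set intervalIntegral MeasureTheory

section AbelAux

/-- Clamp to [0,1]. -/
noncomputable def clampI (t : ℝ) : ℝ := max 0 (min 1 t)

lemma clampI_continuous : Continuous clampI :=
  continuous_const.max (continuous_const.min continuous_id)

lemma clampI_mem (t : ℝ) : clampI t ∈ Set.Icc (0:ℝ) 1 := by
  constructor
  · exact le_max_left _ _
  · simp only [clampI, max_le_iff]
    constructor
    · norm_num
    · exact min_le_left _ _

lemma clampI_eq {t : ℝ} (ht : t ∈ Set.Icc (0:ℝ) 1) : clampI t = t := by
  simp only [clampI, min_eq_right ht.2, max_eq_right ht.1]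

/-- Existence of antiderivatives of continuous-on-[0,1] functions. -/
lemma exists_antideriv {q : ℝ → ℝ} (hq : ContinuousOn q (Set.Icc (0:ℝ) 1)) :
    ∃ R : ℝ → ℝ, ∀ t ∈ Set.Icc (0:ℝ) 1, HasDerivWithinAt R (q t) (Set.Icc (0:ℝ) 1) t := by
  set Q : ℝ → ℝ := fun t => q (clampI t) with hQdef
  have hQ : Continuous Q := hq.comp_continuous clampI_continuous clampI_mem
  refine ⟨fun t => ∫ s in (0:ℝ)..t, Q s, fun t ht => ?_⟩
  have h1 : HasDerivAt (fun t => ∫ s in (0:ℝ)..t, Q s) (Q t) t :=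
    intervalIntegral.integral_hasDerivAt_right (hQ.intervalIntegrable _ _)
      (hQ.stronglyMeasurableAtFilter _ _) hQ.continuousAt
  have h2 : Q t = q t := by rw [hQdef]; simp [clampI_eq ht]
  rw [h2] at h1
  exact h1.hasDerivWithinAt

/-- FTC over [0,1] for functions with one-sided derivatives on [0,1]. -/
lemma ftc01 {Φ u : ℝ → ℝ} (hu : ContinuousOn u (Set.Icc (0:ℝ) 1))
    (hΦ : ∀ t ∈ Set.Icc (0:ℝ) 1, HasDerivWithinAt Φ (u t) (Set.Icc (0:ℝ) 1) t) :
    ∫ t in (0:ℝ)..1, u t = Φ 1 - Φ 0 := by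
  apply intervalIntegral.integral_eq_sub_of_hasDeriv_right_of_le (by norm_num)
  · exact fun t ht => (hΦ t ht).continuousWithinAt
  · intro t ht
    exact ((hΦ t (Set.Ioo_subset_Icc_self ht)).hasDerivAt
      (Icc_mem_nhds ht.1 ht.2)).hasDerivWithinAt
  · apply ContinuousOn.intervalIntegrable
    rwa [Set.uIcc_of_le (by norm_num : (0:ℝ) ≤ 1)]

/-- A continuous function on [0,1] with constant sign and zero integral vanishes. -/
lemma vanish01 {u : ℝ → ℝ} (hu : ContinuousOn u (Set.Icc (0:ℝ) 1))
    (hsign : (∀ t ∈ Set.Icc (0:ℝ) 1, 0 ≤ u t) ∨ (∀ t ∈ Set.Icc (0:ℝ) 1, u t ≤ 0))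
    (hint : ∫ t in (0:ℝ)..1, u t = 0) : ∀ t ∈ Set.Icc (0:ℝ) 1, u t = 0 := by
  have key : ∀ v : ℝ → ℝ, ContinuousOn v (Set.Icc (0:ℝ) 1) →
      (∀ t ∈ Set.Icc (0:ℝ) 1, 0 ≤ v t) → (∫ t in (0:ℝ)..1, v t) = 0 →
      ∀ t ∈ Set.Icc (0:ℝ) 1, v t = 0 := by
    intro v hv hnn hvi t ht
    by_contra hne
    have hpos : 0 < v t := lt_of_le_of_ne (hnn t ht) (Ne.symm hne)
    have : (0:ℝ) < ∫ t in (0:ℝ)..1, v t :=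
      intervalIntegral.integral_pos (by norm_num) hv
        (fun x hx => hnn x ⟨le_of_lt hx.1, hx.2⟩) ⟨t, ht, hpos⟩
    rw [hvi] at this; exact lt_irrefl 0 this
  rcases hsign with h | h
  · exact key u hu h hint
  · intro t ht
    have := key (fun t => -u t) hu.neg (fun t ht => neg_nonneg.mpr (h t ht))
      (by rw [intervalIntegral.integral_neg, hint, neg_zero]) t ht
    simpa using this

/-- If `∫ u = 0`, `u` has constant sign, and `u t₀ ≠ 0`, contradiction. -/
lemma integral_ne_zero01 {u : ℝ → ℝ} (hu : ContinuousOn u (Set.Icc (0:ℝ) 1))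
    (hsign : (∀ t ∈ Set.Icc (0:ℝ) 1, 0 ≤ u t) ∨ (∀ t ∈ Set.Icc (0:ℝ) 1, u t ≤ 0))
    {t₀ : ℝ} (ht₀ : t₀ ∈ Set.Icc (0:ℝ) 1) (hne : u t₀ ≠ 0) :
    (∫ t in (0:ℝ)..1, u t) ≠ 0 := by
  intro h
  exact hne (vanish01 hu hsign h t₀ ht₀)

/-- A continuous nonvanishing function on [0,1] has constant sign. -/
lemma sign_const01 {f : ℝ → ℝ} (hf : ContinuousOn f (Set.Icc (0:ℝ) 1))
    (h0 : ∀ t ∈ Set.Icc (0:ℝ) 1, f t ≠ 0) : ∀ t ∈ Set.Icc (0:ℝ) 1, 0 < f 0 * f t := by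
  intro t ht
  have h01 : (0:ℝ) ∈ Set.Icc (0:ℝ) 1 := by norm_num
  rcases lt_trichotomy (f 0 * f t) 0 with h | h | h
  · exfalso
    have hsub : Set.uIcc (0:ℝ) t ⊆ Set.Icc 0 1 := by
      rw [Set.uIcc_of_le ht.1]; exact Set.Icc_subset_Icc le_rfl ht.2
    have hiv := intermediate_value_uIcc (hf.mono hsub)
    have : (0:ℝ) ∈ Set.uIcc (f 0) (f t) := by
      rcases mul_neg_iff.mp h with ⟨hp, hn⟩ | ⟨hn, hp⟩
      · exact Set.mem_uIcc.mpr (Or.inr ⟨le_of_lt hn, le_of_lt hp⟩)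
      · exact Set.mem_uIcc.mpr (Or.inl ⟨le_of_lt hn, le_of_lt hp⟩)
    obtain ⟨s, hs, hfs⟩ := hiv this
    exact h0 s (hsub hs) hfs
  · exfalso
    rcases mul_eq_zero.mp h with h' | h'
    · exact h0 0 h01 h'
    · exact h0 t ht h'
  · exact h

/-- Sign of product with a constant-sign factor. -/
lemma sign_mul01 {P w : ℝ → ℝ}
    (hP : (∀ t ∈ Set.Icc (0:ℝ) 1, 0 ≤ P t) ∨ (∀ t ∈ Set.Icc (0:ℝ) 1, P t ≤ 0))
    (hw : ∀ t ∈ Set.Icc (0:ℝ) 1, 0 < w 0 * w t) :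
    (∀ t ∈ Set.Icc (0:ℝ) 1, 0 ≤ P t * w t) ∨ (∀ t ∈ Set.Icc (0:ℝ) 1, P t * w t ≤ 0) := by
  have h01 : (0:ℝ) ∈ Set.Icc (0:ℝ) 1 := by norm_num
  have hw0 := hw 0 h01
  rcases lt_or_gt_of_ne (fun h : w 0 = 0 => by simp [h] at hw0) with hneg | hpos
  · -- w 0 < 0, so w t < 0 on [0,1]
    have hwt : ∀ t ∈ Set.Icc (0:ℝ) 1, w t < 0 := fun t ht => by nlinarith [hw t ht]
    rcases hP with h | h
    · right; intro t ht; exact mul_nonpos_of_nonneg_of_nonpos (h t ht) (le_of_lt (hwt t ht))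
    · left; intro t ht; nlinarith [h t ht, hwt t ht]
  · have hwt : ∀ t ∈ Set.Icc (0:ℝ) 1, 0 < w t := fun t ht => by nlinarith [hw t ht]
    rcases hP with h | h
    · left; intro t ht; exact mul_nonneg (h t ht) (le_of_lt (hwt t ht))
    · right; intro t ht; exact mul_nonpos_of_nonpos_of_nonneg (h t ht) (le_of_lt (hwt t ht))

/-- Main comparison engine: if h' = q h + r with r ≥ 0, then h·exp(-R) is monotone. -/
lemma mono_engine {h q r : ℝ → ℝ} (hq : ContinuousOn q (Set.Icc (0:ℝ) 1))
    (hd : ∀ t ∈ Set.Icc (0:ℝ) 1,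
      HasDerivWithinAt h (q t * h t + r t) (Set.Icc (0:ℝ) 1) t)
    (hr : ∀ t ∈ Set.Icc (0:ℝ) 1, 0 ≤ r t) :
    ∃ ψ : ℝ → ℝ, (∀ t, 0 < ψ t) ∧
      MonotoneOn (fun t => h t * ψ t) (Set.Icc (0:ℝ) 1) := by
  obtain ⟨R, hR⟩ := exists_antideriv hq
  refine ⟨fun t => Real.exp (-R t), fun t => Real.exp_pos _, ?_⟩
  set φ : ℝ → ℝ := fun t => h t * Real.exp (-R t) with hφdef
  have hφd : ∀ t ∈ Set.Icc (0:ℝ) 1,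
      HasDerivWithinAt φ (r t * Real.exp (-R t)) (Set.Icc (0:ℝ) 1) t := by
    intro t ht
    have h1 := (hd t ht).mul (((hR t ht).neg).exp)
    refine h1.congr_deriv ?_
    simp only [Pi.neg_apply]; ring
  apply monotoneOn_of_deriv_nonneg (convex_Icc 0 1)
  · exact fun t ht => (hφd t ht).continuousWithinAt
  · intro t ht
    rw [interior_Icc] at ht
    exact (((hφd t (Set.Ioo_subset_Icc_self ht)).hasDerivAt
      (Icc_mem_nhds ht.1 ht.2)).differentiableAt).differentiableWithinAt
  · intro t ht
    rw [interior_Icc] at ht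
    rw [((hφd t (Set.Ioo_subset_Icc_self ht)).hasDerivAt (Icc_mem_nhds ht.1 ht.2)).deriv]
    exact mul_nonneg (hr t (Set.Ioo_subset_Icc_self ht)) (le_of_lt (Real.exp_pos _))

/-- Constancy engine: if h' = q h then h·exp(-R) is constant. -/
lemma const_engine {h q : ℝ → ℝ} (hq : ContinuousOn q (Set.Icc (0:ℝ) 1))
    (hd : ∀ t ∈ Set.Icc (0:ℝ) 1,
      HasDerivWithinAt h (q t * h t) (Set.Icc (0:ℝ) 1) t) :
    ∃ ψ : ℝ → ℝ, (∀ t, 0 < ψ t) ∧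
      ∀ t ∈ Set.Icc (0:ℝ) 1, h t * ψ t = h 0 * ψ 0 := by
  obtain ⟨R, hR⟩ := exists_antideriv hq
  refine ⟨fun t => Real.exp (-R t), fun t => Real.exp_pos _, ?_⟩
  set φ : ℝ → ℝ := fun t => h t * Real.exp (-R t) with hφdef
  have hφd : ∀ t ∈ Set.Icc (0:ℝ) 1,
      HasDerivWithinAt φ 0 (Set.Icc (0:ℝ) 1) t := by
    intro t ht
    have h1 := (hd t ht).mul (((hR t ht).neg).exp)
    refine h1.congr_deriv ?_
    ring
  have h01 : (0:ℝ) ∈ Set.Icc (0:ℝ) 1 := by norm_num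
  intro t ht
  -- φ is both monotone and antitone, hence constant
  have hmono : MonotoneOn φ (Set.Icc (0:ℝ) 1) := by
    apply monotoneOn_of_deriv_nonneg (convex_Icc 0 1)
    · exact fun s hs => (hφd s hs).continuousWithinAt
    · intro s hs
      rw [interior_Icc] at hs
      exact (((hφd s (Set.Ioo_subset_Icc_self hs)).hasDerivAt
        (Icc_mem_nhds hs.1 hs.2)).differentiableAt).differentiableWithinAt
    · intro s hs
      rw [interior_Icc] at hs
      rw [((hφd s (Set.Ioo_subset_Icc_self hs)).hasDerivAt (Icc_mem_nhds hs.1 hs.2)).deriv]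
  have hanti : AntitoneOn φ (Set.Icc (0:ℝ) 1) := by
    apply antitoneOn_of_deriv_nonpos (convex_Icc 0 1)
    · exact fun s hs => (hφd s hs).continuousWithinAt
    · intro s hs
      rw [interior_Icc] at hs
      exact (((hφd s (Set.Ioo_subset_Icc_self hs)).hasDerivAt
        (Icc_mem_nhds hs.1 hs.2)).differentiableAt).differentiableWithinAt
    · intro s hs
      rw [interior_Icc] at hs
      rw [((hφd s (Set.Ioo_subset_Icc_self hs)).hasDerivAt (Icc_mem_nhds hs.1 hs.2)).deriv]
  show φ t = φ 0
  exact le_antisymm (hanti h01 ht ht.1) (hmono h01 ht ht.1)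

lemma IsAbelSolution.contOn01 {A B γ : ℝ → ℝ} (hγ : IsAbelSolution A B γ) :
    ContinuousOn γ (Set.Icc (0:ℝ) 1) :=
  fun t ht => (hγ t ht).continuousWithinAt

/-- Solutions with nonzero initial value never vanish and keep their sign. -/
lemma abel_never_zero {A B γ : ℝ → ℝ} (hA : ContinuousOn A (Set.Icc (0:ℝ) 1))
    (hB : ContinuousOn B (Set.Icc (0:ℝ) 1)) (hγ : IsAbelSolution A B γ)
    (h0 : γ 0 ≠ 0) : ∀ t ∈ Set.Icc (0:ℝ) 1, 0 < γ 0 * γ t := by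
  have hγc := hγ.contOn01
  have hq : ContinuousOn (fun t => A t * γ t ^ 2 + B t * γ t) (Set.Icc (0:ℝ) 1) :=
    ((hA.mul (hγc.pow 2)).add (hB.mul hγc))
  obtain ⟨ψ, hψpos, hconst⟩ := const_engine hq (fun t ht => by
    have := hγ t ht
    convert this using 1
    ring)
  intro t ht
  have hc := hconst t ht
  have hψt := hψpos t
  have hψ0 := hψpos 0
  have h00 : 0 < γ 0 * γ 0 := by
    rcases lt_or_gt_of_ne h0 with h | h <;> nlinarith
  have key : γ 0 * (γ t * ψ t) = γ 0 * (γ 0 * ψ 0) := by rw [hc]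
  nlinarith [key, mul_pos h00 hψ0, hψt]

/-- Uniqueness: two solutions agreeing at one point agree on [0,1]. -/
lemma abel_eqOn {A B γ σ : ℝ → ℝ} (hA : ContinuousOn A (Set.Icc (0:ℝ) 1))
    (hB : ContinuousOn B (Set.Icc (0:ℝ) 1)) (hγ : IsAbelSolution A B γ)
    (hσ : IsAbelSolution A B σ) {t₀ : ℝ} (ht₀ : t₀ ∈ Set.Icc (0:ℝ) 1)
    (heq : γ t₀ = σ t₀) : Set.EqOn γ σ (Set.Icc (0:ℝ) 1) := by
  have hγc := hγ.contOn01
  have hσc := hσ.contOn01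
  have hq : ContinuousOn
      (fun t => A t * (γ t ^ 2 + γ t * σ t + σ t ^ 2) + B t * (γ t + σ t))
      (Set.Icc (0:ℝ) 1) :=
    (hA.mul (((hγc.pow 2).add (hγc.mul hσc)).add (hσc.pow 2))).add (hB.mul (hγc.add hσc))
  obtain ⟨ψ, hψpos, hconst⟩ := const_engine (h := fun t => γ t - σ t) hq (fun t ht => by
    have h1 := (hγ t ht).sub (hσ t ht)
    refine h1.congr_deriv ?_
    ring)
  have h0 : γ 0 - σ 0 = 0 := by
    have hc := hconst t₀ ht₀
    have hψ0 := hψpos 0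
    have hψt := hψpos t₀
    have : γ t₀ - σ t₀ = 0 := by rw [heq]; ring
    rw [this] at hc
    nlinarith [hc]
  intro t ht
  have hc := hconst t ht
  rw [h0] at hc
  have hψ := hψpos t
  have : γ t - σ t = 0 := by nlinarith
  linarith

/-- Core trichotomy for h' = q h + r, r ≥ 0, h periodic. -/
lemma core_trichotomy {h q r : ℝ → ℝ} (hq : ContinuousOn q (Set.Icc (0:ℝ) 1))
    (hd : ∀ t ∈ Set.Icc (0:ℝ) 1,
      HasDerivWithinAt h (q t * h t + r t) (Set.Icc (0:ℝ) 1) t)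
    (hr : ∀ t ∈ Set.Icc (0:ℝ) 1, 0 ≤ r t) (hper : h 0 = h 1) :
    (∀ t ∈ Set.Icc (0:ℝ) 1, h t = 0) ∨ (∀ t ∈ Set.Icc (0:ℝ) 1, 0 < h 0 * h t) := by
  obtain ⟨ψ, hψpos, hmono⟩ := mono_engine hq hd hr
  have h01 : (0:ℝ) ∈ Set.Icc (0:ℝ) 1 := by norm_num
  have h11 : (1:ℝ) ∈ Set.Icc (0:ℝ) 1 := by norm_num
  rcases lt_trichotomy (h 0) 0 with hneg | hzero | hpos
  · right
    intro t ht
    have h1 : h t * ψ t ≤ h 1 * ψ 1 := hmono ht h11 ht.2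
    rw [← hper] at h1
    have : h 0 * ψ 1 < 0 := mul_neg_of_neg_of_pos hneg (hψpos 1)
    have hψt := hψpos t
    nlinarith
  · left
    intro t ht
    have hl : h 0 * ψ 0 ≤ h t * ψ t := hmono h01 ht ht.1
    have hu : h t * ψ t ≤ h 1 * ψ 1 := hmono ht h11 ht.2
    have h1z : h 1 = 0 := by rw [← hper]; exact hzero
    rw [hzero] at hl
    rw [h1z] at hu
    simp only [zero_mul] at hl hu
    have hψt := hψpos t
    nlinarith
  · right
    intro t ht
    have h1 : h 0 * ψ 0 ≤ h t * ψ t := hmono h01 ht ht.1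
    have : 0 < h 0 * ψ 0 := mul_pos hpos (hψpos 0)
    have hψt := hψpos t
    nlinarith

/-- Side trichotomy of a periodic orbit with respect to a line x = x₀ on which
the vector field has constant sign. -/
lemma abel_side {A B γ : ℝ → ℝ} {x₀ : ℝ} (hA : ContinuousOn A (Set.Icc (0:ℝ) 1))
    (hB : ContinuousOn B (Set.Icc (0:ℝ) 1)) (hγ : IsAbelSolution A B γ)
    (hper : γ 0 = γ 1)
    (hr : (∀ t ∈ Set.Icc (0:ℝ) 1, 0 ≤ A t * x₀ ^ 3 + B t * x₀ ^ 2) ∨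
          (∀ t ∈ Set.Icc (0:ℝ) 1, A t * x₀ ^ 3 + B t * x₀ ^ 2 ≤ 0)) :
    (∀ t ∈ Set.Icc (0:ℝ) 1, γ t = x₀) ∨
    (∀ t ∈ Set.Icc (0:ℝ) 1, 0 < (γ 0 - x₀) * (γ t - x₀)) := by
  have hγc := hγ.contOn01
  have hq : ContinuousOn
      (fun t => A t * (γ t ^ 2 + γ t * x₀ + x₀ ^ 2) + B t * (γ t + x₀))
      (Set.Icc (0:ℝ) 1) :=
    (hA.mul (((hγc.pow 2).add (hγc.mul continuousOn_const)).add continuousOn_const)).add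
      (hB.mul (hγc.add continuousOn_const))
  have hper' : γ 0 - x₀ = γ 1 - x₀ := by rw [hper]
  rcases hr with hr | hr
  · have := core_trichotomy (h := fun t => γ t - x₀)
      (r := fun t => A t * x₀ ^ 3 + B t * x₀ ^ 2) hq (fun t ht => by
        have h1 := (hγ t ht).sub_const x₀
        refine h1.congr_deriv ?_
        ring) hr hper'
    rcases this with h | h
    · left; intro t ht; have := h t ht; linarith
    · right; exact h
  · have := core_trichotomy (h := fun t => x₀ - γ t)
      (r := fun t => -(A t * x₀ ^ 3 + B t * x₀ ^ 2)) hq (fun t ht => by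
        have h1 := (hγ t ht).const_sub x₀
        refine h1.congr_deriv ?_
        ring) (fun t ht => by have := hr t ht; linarith)
      (by show x₀ - γ 0 = x₀ - γ 1; rw [hper])
    rcases this with h | h
    · left; intro t ht; have := h t ht; linarith
    · right; intro t ht; have := h t ht; nlinarith

section Ids
variable {A B γ γ₁ γ₂ : ℝ → ℝ} {x₀ : ℝ}

/-- Identity: ∫ (Aγ² + Bγ) = 0 for a nonvanishing periodic orbit. -/
lemma int_id2 (hA : ContinuousOn A (Set.Icc (0:ℝ) 1)) (hB : ContinuousOn B (Set.Icc (0:ℝ) 1)) (hγ : IsAbelSolution A B γ) (hper : γ 0 = γ 1)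
    (hne : ∀ t ∈ Set.Icc (0:ℝ) 1, γ t ≠ 0) :
    ∫ t in (0:ℝ)..1, (A t * γ t ^ 2 + B t * γ t) = 0 := by
  have hγc := hγ.contOn01
  have h := ftc01 (Φ := fun t => Real.log (γ t))
    (u := fun t => A t * γ t ^ 2 + B t * γ t)
    ((hA.mul (hγc.pow 2)).add (hB.mul hγc))
    (fun t ht => by
      have h1 := (hγ t ht).log (hne t ht)
      convert h1 using 1
      have e1 := hne t ht
      field_simp
      )
  rw [h]; simp [hper]

/-- Identity: ∫ (Aγ + B) = 0 for a nonvanishing periodic orbit. -/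
lemma int_id3 (hA : ContinuousOn A (Set.Icc (0:ℝ) 1)) (hB : ContinuousOn B (Set.Icc (0:ℝ) 1)) (hγ : IsAbelSolution A B γ) (hper : γ 0 = γ 1)
    (hne : ∀ t ∈ Set.Icc (0:ℝ) 1, γ t ≠ 0) :
    ∫ t in (0:ℝ)..1, (A t * γ t + B t) = 0 := by
  have hγc := hγ.contOn01
  have h := ftc01 (Φ := fun t => -(γ t)⁻¹)
    (u := fun t => A t * γ t + B t)
    ((hA.mul hγc).add hB)
    (fun t ht => by
      have h1 := ((hγ t ht).inv (hne t ht)).neg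
      refine h1.congr_deriv ?_
      have := hne t ht
      field_simp
      )
  rw [h]; simp [hper]

/-- Identity: ∫ (A + B/γ) = 0 for a nonvanishing periodic orbit. -/
lemma int_id4 (hA : ContinuousOn A (Set.Icc (0:ℝ) 1)) (hB : ContinuousOn B (Set.Icc (0:ℝ) 1)) (hγ : IsAbelSolution A B γ) (hper : γ 0 = γ 1)
    (hne : ∀ t ∈ Set.Icc (0:ℝ) 1, γ t ≠ 0) :
    ∫ t in (0:ℝ)..1, (A t + B t * (γ t)⁻¹) = 0 := by
  have hγc := hγ.contOn01
  have h := ftc01 (Φ := fun t => -(1/2) * ((γ t) ^ 2)⁻¹)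
    (u := fun t => A t + B t * (γ t)⁻¹)
    (hA.add (hB.mul (hγc.inv₀ hne)))
    (fun t ht => by
      have h1 := (((hγ t ht).pow 2).inv (pow_ne_zero 2 (hne t ht))).const_mul (-(1/2) : ℝ)
      refine h1.congr_deriv ?_
      simp only [Pi.pow_apply]
      have := hne t ht
      field_simp
      ring)
  rw [h]; simp [hper]

/-- Identity: ∫ (Aγ² + (Ax₀+B)γ²/(γ−x₀)) = 0 for an orbit avoiding x₀. -/
lemma int_id5 (hA : ContinuousOn A (Set.Icc (0:ℝ) 1)) (hB : ContinuousOn B (Set.Icc (0:ℝ) 1)) (hγ : IsAbelSolution A B γ) (hper : γ 0 = γ 1)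
    (hne : ∀ t ∈ Set.Icc (0:ℝ) 1, γ t - x₀ ≠ 0) :
    ∫ t in (0:ℝ)..1,
      (A t * γ t ^ 2 + (A t * x₀ + B t) * (γ t ^ 2 / (γ t - x₀))) = 0 := by
  have hγc := hγ.contOn01
  have h := ftc01 (Φ := fun t => Real.log (γ t - x₀))
    (u := fun t => A t * γ t ^ 2 + (A t * x₀ + B t) * (γ t ^ 2 / (γ t - x₀)))
    ((hA.mul (hγc.pow 2)).add
      (((hA.mul continuousOn_const).add hB).mul
        ((hγc.pow 2).div (hγc.sub continuousOn_const) hne)))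
    (fun t ht => by
      have h1 := ((hγ t ht).sub_const x₀).log (hne t ht)
      convert h1 using 1
      have := hne t ht
      field_simp
      ring)
  rw [h]; simp [hper]

/-- Identity (two orbits): ∫ A·(γ₂−γ₁) = 0. -/
lemma int_id6' (hA : ContinuousOn A (Set.Icc (0:ℝ) 1)) (hB : ContinuousOn B (Set.Icc (0:ℝ) 1)) (hγ₁ : IsAbelSolution A B γ₁) (hγ₂ : IsAbelSolution A B γ₂)
    (hper₁ : γ₁ 0 = γ₁ 1) (hper₂ : γ₂ 0 = γ₂ 1)
    (hne₁ : ∀ t ∈ Set.Icc (0:ℝ) 1, γ₁ t ≠ 0)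
    (hne₂ : ∀ t ∈ Set.Icc (0:ℝ) 1, γ₂ t ≠ 0) :
    ∫ t in (0:ℝ)..1, A t * (γ₂ t - γ₁ t) = 0 := by
  have hγc₁ := hγ₁.contOn01
  have hγc₂ := hγ₂.contOn01
  have h := ftc01 (Φ := fun t => (γ₁ t)⁻¹ - (γ₂ t)⁻¹)
    (u := fun t => A t * (γ₂ t - γ₁ t))
    (hA.mul (hγc₂.sub hγc₁))
    (fun t ht => by
      have h1 := ((hγ₁ t ht).inv (hne₁ t ht)).sub ((hγ₂ t ht).inv (hne₂ t ht))
      refine h1.congr_deriv ?_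
      have e1 := hne₁ t ht
      have e2 := hne₂ t ht
      field_simp
      ring)
  rw [h]; simp [hper₁, hper₂]

/-- Identity (two orbits): ∫ B·(γ₂−γ₁)/(γ₁γ₂) = 0. -/
lemma int_id7 (hA : ContinuousOn A (Set.Icc (0:ℝ) 1)) (hB : ContinuousOn B (Set.Icc (0:ℝ) 1)) (hγ₁ : IsAbelSolution A B γ₁) (hγ₂ : IsAbelSolution A B γ₂)
    (hper₁ : γ₁ 0 = γ₁ 1) (hper₂ : γ₂ 0 = γ₂ 1)
    (hne₁ : ∀ t ∈ Set.Icc (0:ℝ) 1, γ₁ t ≠ 0)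
    (hne₂ : ∀ t ∈ Set.Icc (0:ℝ) 1, γ₂ t ≠ 0) :
    ∫ t in (0:ℝ)..1, B t * ((γ₂ t - γ₁ t) / (γ₁ t * γ₂ t)) = 0 := by
  have hγc₁ := hγ₁.contOn01
  have hγc₂ := hγ₂.contOn01
  have h := ftc01
    (Φ := fun t => -(1/2) * ((γ₁ t) ^ 2)⁻¹ + (1/2) * ((γ₂ t) ^ 2)⁻¹)
    (u := fun t => B t * ((γ₂ t - γ₁ t) / (γ₁ t * γ₂ t)))
    (hB.mul ((hγc₂.sub hγc₁).div (hγc₁.mul hγc₂)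
      (fun t ht => mul_ne_zero (hne₁ t ht) (hne₂ t ht))))
    (fun t ht => by
      have h1 := ((((hγ₁ t ht).pow 2).inv (pow_ne_zero 2 (hne₁ t ht))).const_mul
        (-(1/2) : ℝ)).add
        ((((hγ₂ t ht).pow 2).inv (pow_ne_zero 2 (hne₂ t ht))).const_mul ((1/2) : ℝ))
      refine h1.congr_deriv ?_
      simp only [Pi.pow_apply]
      have e1 := hne₁ t ht
      have e2 := hne₂ t ht
      field_simp
      ring)
  rw [h]; simp [hper₁, hper₂]

/-- Identity (two orbits, line x₀): ∫ (Ax₀+B)·x₀²(γ₂−γ₁)/((γ₁−x₀)(γ₂−x₀)) = 0. -/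
lemma int_id6 (hA : ContinuousOn A (Set.Icc (0:ℝ) 1)) (hB : ContinuousOn B (Set.Icc (0:ℝ) 1)) (hγ₁ : IsAbelSolution A B γ₁) (hγ₂ : IsAbelSolution A B γ₂)
    (hper₁ : γ₁ 0 = γ₁ 1) (hper₂ : γ₂ 0 = γ₂ 1)
    (hne₁ : ∀ t ∈ Set.Icc (0:ℝ) 1, γ₁ t ≠ 0)
    (hne₂ : ∀ t ∈ Set.Icc (0:ℝ) 1, γ₂ t ≠ 0)
    (hme₁ : ∀ t ∈ Set.Icc (0:ℝ) 1, γ₁ t - x₀ ≠ 0)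
    (hme₂ : ∀ t ∈ Set.Icc (0:ℝ) 1, γ₂ t - x₀ ≠ 0) :
    ∫ t in (0:ℝ)..1, (A t * x₀ + B t) *
      (x₀ ^ 2 * (γ₂ t - γ₁ t) / ((γ₁ t - x₀) * (γ₂ t - x₀))) = 0 := by
  have hγc₁ := hγ₁.contOn01
  have hγc₂ := hγ₂.contOn01
  have h := ftc01
    (Φ := fun t => (Real.log (γ₂ t) - Real.log (γ₂ t - x₀))
      - (Real.log (γ₁ t) - Real.log (γ₁ t - x₀))
      + (x₀ * (γ₁ t)⁻¹ - x₀ * (γ₂ t)⁻¹))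
    (u := fun t => (A t * x₀ + B t) *
      (x₀ ^ 2 * (γ₂ t - γ₁ t) / ((γ₁ t - x₀) * (γ₂ t - x₀))))
    (((hA.mul continuousOn_const).add hB).mul
      ((continuousOn_const.mul (hγc₂.sub hγc₁)).div
        ((hγc₁.sub continuousOn_const).mul (hγc₂.sub continuousOn_const))
        (fun t ht => mul_ne_zero (hme₁ t ht) (hme₂ t ht))))
    (fun t ht => by
      have h1 := ((((hγ₂ t ht).log (hne₂ t ht)).sub
          (((hγ₂ t ht).sub_const x₀).log (hme₂ t ht))).sub
        (((hγ₁ t ht).log (hne₁ t ht)).sub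
          (((hγ₁ t ht).sub_const x₀).log (hme₁ t ht)))).add
        ((((hγ₁ t ht).inv (hne₁ t ht)).const_mul x₀).sub
          (((hγ₂ t ht).inv (hne₂ t ht)).const_mul x₀))
      refine h1.congr_deriv ?_
      have e1 := hne₁ t ht
      have e2 := hne₂ t ht
      have f1 := hme₁ t ht
      have f2 := hme₂ t ht
      field_simp
      ring)
  rw [h]; simp [hper₁, hper₂]

/-- Identity (proportional case): ∫ A = 0 for an orbit avoiding 0 and x₀. -/
lemma int_id8 (hA : ContinuousOn A (Set.Icc (0:ℝ) 1)) (hB : ContinuousOn B (Set.Icc (0:ℝ) 1)) (hγ : IsAbelSolution A B γ) (hper : γ 0 = γ 1) (hx₀ : x₀ ≠ 0)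
    (hprop : ∀ t ∈ Set.Icc (0:ℝ) 1, B t = -x₀ * A t)
    (hne : ∀ t ∈ Set.Icc (0:ℝ) 1, γ t ≠ 0)
    (hme : ∀ t ∈ Set.Icc (0:ℝ) 1, γ t - x₀ ≠ 0) :
    ∫ t in (0:ℝ)..1, A t = 0 := by
  have hγc := hγ.contOn01
  have h := ftc01
    (Φ := fun t => (x₀ ^ 2)⁻¹ * (Real.log (γ t - x₀) - Real.log (γ t))
      + (x₀ * γ t)⁻¹)
    (u := fun t => A t) hA
    (fun t ht => by
      have h1 := (((((hγ t ht).sub_const x₀).log (hme t ht)).sub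
          ((hγ t ht).log (hne t ht))).const_mul ((x₀ ^ 2)⁻¹ : ℝ)).add
        (((hγ t ht).const_mul x₀).inv (mul_ne_zero hx₀ (hne t ht)))
      refine h1.congr_deriv ?_
      have e1 := hne t ht
      have f1 := hme t ht
      have hb := hprop t ht
      rw [hb]
      field_simp
      ring)
  rw [h]; simp [hper]

end Ids

section ER
variable {A B γ : ℝ → ℝ} {x₀ : ℝ}

lemma intInt {u : ℝ → ℝ} (hu : ContinuousOn u (Set.Icc (0:ℝ) 1)) :
    IntervalIntegrable u MeasureTheory.volume 0 1 := by
  apply ContinuousOn.intervalIntegrable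
  rwa [Set.uIcc_of_le (by norm_num : (0:ℝ) ≤ 1)]

lemma E_repr_a (hA : ContinuousOn A (Set.Icc (0:ℝ) 1))
    (hB : ContinuousOn B (Set.Icc (0:ℝ) 1))
    (hγ : IsAbelSolution A B γ) (hper : γ 0 = γ 1)
    (hne : ∀ t ∈ Set.Icc (0:ℝ) 1, γ t ≠ 0) :
    ∫ t in (0:ℝ)..1, (3 * A t * γ t ^ 2 + 2 * B t * γ t)
      = ∫ t in (0:ℝ)..1, A t * γ t ^ 2 := by
  have hγc := hγ.contOn01
  have i1 : IntervalIntegrable (fun t => A t * γ t ^ 2) MeasureTheory.volume 0 1 :=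
    intInt (hA.mul (hγc.pow 2))
  have i2 : IntervalIntegrable (fun t => 2 * (A t * γ t ^ 2 + B t * γ t))
      MeasureTheory.volume 0 1 :=
    intInt (continuousOn_const.mul ((hA.mul (hγc.pow 2)).add (hB.mul hγc)))
  have h1 : ∫ t in (0:ℝ)..1, (3 * A t * γ t ^ 2 + 2 * B t * γ t)
      = ∫ t in (0:ℝ)..1, (A t * γ t ^ 2 + 2 * (A t * γ t ^ 2 + B t * γ t)) := by
    apply intervalIntegral.integral_congr
    intro t _
    ring
  rw [h1, intervalIntegral.integral_add i1 i2, intervalIntegral.integral_const_mul,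
    int_id2 hA hB hγ hper hne]
  ring

lemma E_repr_b (hA : ContinuousOn A (Set.Icc (0:ℝ) 1))
    (hB : ContinuousOn B (Set.Icc (0:ℝ) 1))
    (hγ : IsAbelSolution A B γ) (hper : γ 0 = γ 1)
    (hne : ∀ t ∈ Set.Icc (0:ℝ) 1, γ t ≠ 0) :
    ∫ t in (0:ℝ)..1, (3 * A t * γ t ^ 2 + 2 * B t * γ t)
      = -∫ t in (0:ℝ)..1, B t * γ t := by
  have hγc := hγ.contOn01
  have i1 : IntervalIntegrable (fun t => 3 * (A t * γ t ^ 2 + B t * γ t))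
      MeasureTheory.volume 0 1 :=
    intInt (continuousOn_const.mul ((hA.mul (hγc.pow 2)).add (hB.mul hγc)))
  have i2 : IntervalIntegrable (fun t => B t * γ t) MeasureTheory.volume 0 1 :=
    intInt (hB.mul hγc)
  have h1 : ∫ t in (0:ℝ)..1, (3 * A t * γ t ^ 2 + 2 * B t * γ t)
      = ∫ t in (0:ℝ)..1, (3 * (A t * γ t ^ 2 + B t * γ t) - B t * γ t) := by
    apply intervalIntegral.integral_congr
    intro t _
    ring
  rw [h1, intervalIntegral.integral_sub i1 i2, intervalIntegral.integral_const_mul,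
    int_id2 hA hB hγ hper hne]
  ring

lemma E_repr_c (hA : ContinuousOn A (Set.Icc (0:ℝ) 1))
    (hB : ContinuousOn B (Set.Icc (0:ℝ) 1))
    (hγ : IsAbelSolution A B γ) (hper : γ 0 = γ 1)
    (hne : ∀ t ∈ Set.Icc (0:ℝ) 1, γ t ≠ 0)
    (hme : ∀ t ∈ Set.Icc (0:ℝ) 1, γ t - x₀ ≠ 0) :
    ∫ t in (0:ℝ)..1, (3 * A t * γ t ^ 2 + 2 * B t * γ t)
      = -∫ t in (0:ℝ)..1, (A t * x₀ + B t) * (γ t ^ 2 / (γ t - x₀)) := by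
  have hγc := hγ.contOn01
  have i1 : IntervalIntegrable
      (fun t => A t * γ t ^ 2 + (A t * x₀ + B t) * (γ t ^ 2 / (γ t - x₀)))
      MeasureTheory.volume 0 1 :=
    intInt ((hA.mul (hγc.pow 2)).add (((hA.mul continuousOn_const).add hB).mul
      ((hγc.pow 2).div (hγc.sub continuousOn_const) hme)))
  have i2 : IntervalIntegrable (fun t => (A t * x₀ + B t) * (γ t ^ 2 / (γ t - x₀)))
      MeasureTheory.volume 0 1 :=
    intInt (((hA.mul continuousOn_const).add hB).mul
      ((hγc.pow 2).div (hγc.sub continuousOn_const) hme))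
  rw [E_repr_a hA hB hγ hper hne]
  have h1 : ∫ t in (0:ℝ)..1, A t * γ t ^ 2
      = ∫ t in (0:ℝ)..1,
        ((A t * γ t ^ 2 + (A t * x₀ + B t) * (γ t ^ 2 / (γ t - x₀)))
          - (A t * x₀ + B t) * (γ t ^ 2 / (γ t - x₀))) := by
    apply intervalIntegral.integral_congr
    intro t _
    ring
  rw [h1, intervalIntegral.integral_sub i1 i2, int_id5 hA hB hγ hper hme]
  ring

end ER

/-- Degenerate (separable) Abel equations with zero mean have a center at the origin. -/
lemma abel_center {A B C : ℝ → ℝ} {c d : ℝ} (hC : Continuous C)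
    (hA : ContinuousOn A (Set.Icc (0:ℝ) 1)) (hB : ContinuousOn B (Set.Icc (0:ℝ) 1))
    (hAC : ∀ t ∈ Set.Icc (0:ℝ) 1, A t = c * C t)
    (hBC : ∀ t ∈ Set.Icc (0:ℝ) 1, B t = d * C t)
    (hint : ∫ t in (0:ℝ)..1, C t = 0) : HasCenterAtZero A B := by
  by_cases hcd : c = 0 ∧ d = 0
  · -- trivial case: all constants are solutions
    refine ⟨1, by norm_num, fun ρ _ => ⟨fun _ => ρ, fun t ht => ?_, rfl, rfl⟩⟩
    have : A t * ρ ^ 3 + B t * ρ ^ 2 = 0 := by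
      rw [hAC t ht, hBC t ht, hcd.1, hcd.2]; ring
    rw [this]
    exact hasDerivWithinAt_const t _ ρ
  obtain ⟨M, hM⟩ := isCompact_Icc.exists_bound_of_continuousOn hC.continuousOn
  have hM' : ∀ t ∈ Set.Icc (0:ℝ) 1, |C t| ≤ M := by
    intro t ht; simpa [Real.norm_eq_abs] using hM t ht
  have hM0 : 0 ≤ M := le_trans (abs_nonneg _) (hM' 0 (by norm_num))
  set K : ℝ := 8 * M * (|c| + |d|) + 1 with hKdef
  have hK : 0 < K := by positivity
  set ε₂ : ℝ := if c = 0 ∨ d = 0 then 1 else |d| / (2 * |c|) with hε₂def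
  have hε₂ : 0 < ε₂ := by
    rw [hε₂def]
    split_ifs with h
    · norm_num
    · push_neg at h
      have hc := h.1
      have hd := h.2
      have : 0 < |d| := abs_pos.mpr hd
      have : 0 < |c| := abs_pos.mpr hc
      positivity
  refine ⟨min (min 1 K⁻¹) ε₂, by positivity, fun ρ hρ => ?_⟩
  have hρ1 : |ρ| ≤ 1 := le_of_lt (lt_of_lt_of_le hρ ((min_le_left _ _).trans (min_le_left _ _)))
  have hρK : |ρ| * K ≤ 1 := by
    have h1 : |ρ| ≤ K⁻¹ :=
      le_of_lt (lt_of_lt_of_le hρ ((min_le_left _ _).trans (min_le_right _ _)))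
    calc |ρ| * K ≤ K⁻¹ * K := mul_le_mul_of_nonneg_right h1 (le_of_lt hK)
      _ = 1 := inv_mul_cancel₀ (ne_of_gt hK)
  have hρ2 : |ρ| < ε₂ := lt_of_lt_of_le hρ (min_le_right _ _)
  by_cases hρ0 : ρ = 0
  · refine ⟨fun _ => 0, fun t ht => ?_, hρ0.symm, rfl⟩
    have : A t * (0:ℝ) ^ 3 + B t * (0:ℝ) ^ 2 = 0 := by ring
    rw [this]
    exact hasDerivWithinAt_const t _ 0
  set v : ℝ → ℝ → ℝ := fun t x => C t * (c * x ^ 3 + d * x ^ 2) with hvdef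
  have habs : ∀ x : ℝ, |x - ρ| ≤ |ρ| → |x| ≤ 2 * |ρ| := by
    intro x hx
    calc |x| = |(x - ρ) + ρ| := by ring_nf
      _ ≤ |x - ρ| + |ρ| := abs_add_le _ _
      _ ≤ 2 * |ρ| := by linarith
  have hpl : IsPicardLindelof v (tmin := 0) (tmax := 1) ⟨0, by norm_num⟩ ρ ⟨|ρ|, abs_nonneg ρ⟩ 0
      ⟨|ρ|, abs_nonneg ρ⟩ (Real.toNNReal (M * (12 * |c| + 4 * |d|))) := by
    constructor
    · intro t ht
      apply LipschitzOnWith.of_dist_le_mul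
      intro x hx y hy
      have hx' : |x - ρ| ≤ |ρ| := by
        rw [Metric.mem_closedBall, Real.dist_eq] at hx; exact hx
      have hy' : |y - ρ| ≤ |ρ| := by
        rw [Metric.mem_closedBall, Real.dist_eq] at hy; exact hy
      have hx2 : |x| ≤ 2 := le_trans (habs x hx') (by linarith)
      have hy2 : |y| ≤ 2 := le_trans (habs y hy') (by linarith)
      rw [Real.dist_eq, Real.dist_eq]
      have hfactor : v t x - v t y
          = C t * ((x - y) * (c * (x^2 + x*y + y^2) + d * (x + y))) := by
        rw [hvdef]; ring
      have h1 : |v t x - v t y|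
          = |C t| * (|x - y| * |c * (x^2 + x*y + y^2) + d * (x + y)|) := by
        rw [hfactor, abs_mul, abs_mul]
      rw [h1]
      have hb1 : |c * (x^2 + x*y + y^2) + d * (x + y)| ≤ 12 * |c| + 4 * |d| := by
        calc |c * (x^2 + x*y + y^2) + d * (x + y)|
            ≤ |c * (x^2 + x*y + y^2)| + |d * (x + y)| := abs_add_le _ _
          _ = |c| * |x^2 + x*y + y^2| + |d| * |x + y| := by rw [abs_mul, abs_mul]
          _ ≤ |c| * 12 + |d| * 4 := by
              apply add_le_add
              · apply mul_le_mul_of_nonneg_left _ (abs_nonneg c)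
                calc |x^2 + x*y + y^2| ≤ |x^2 + x*y| + |y^2| := abs_add_le _ _
                  _ ≤ |x^2| + |x*y| + |y^2| := by linarith [abs_add_le (x^2) (x*y)]
                  _ = |x| ^ 2 + |x| * |y| + |y| ^ 2 := by rw [abs_mul, abs_pow, abs_pow]
                  _ ≤ 12 := by nlinarith [abs_nonneg x, abs_nonneg y]
              · apply mul_le_mul_of_nonneg_left _ (abs_nonneg d)
                calc |x + y| ≤ |x| + |y| := abs_add_le _ _
                  _ ≤ 4 := by linarith
          _ = 12 * |c| + 4 * |d| := by ring
      have hCt : |C t| ≤ M := hM' t ht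
      have hcoe : (Real.toNNReal (M * (12 * |c| + 4 * |d|)) : ℝ)
          = M * (12 * |c| + 4 * |d|) := Real.coe_toNNReal _ (by positivity)
      rw [hcoe]
      have hE0 : 0 ≤ |c * (x^2 + x*y + y^2) + d * (x + y)| := abs_nonneg _
      have hxy0 : 0 ≤ |x - y| := abs_nonneg _
      calc |C t| * (|x - y| * |c * (x^2 + x*y + y^2) + d * (x + y)|)
          ≤ M * (|x - y| * |c * (x^2 + x*y + y^2) + d * (x + y)|) :=
            mul_le_mul_of_nonneg_right hCt (by positivity)
        _ ≤ M * (|x - y| * (12 * |c| + 4 * |d|)) := by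
            apply mul_le_mul_of_nonneg_left _ hM0
            exact mul_le_mul_of_nonneg_left hb1 hxy0
        _ = M * (12 * |c| + 4 * |d|) * |x - y| := by ring
    · intro x _
      exact (hC.mul continuous_const).continuousOn
    · intro t ht x hx
      have hx' : |x - ρ| ≤ |ρ| := by
        rw [Metric.mem_closedBall, Real.dist_eq] at hx; exact hx
      have hx2 : |x| ≤ 2 * |ρ| := habs x hx'
      rw [Real.norm_eq_abs]
      have h1 : |v t x| ≤ M * (|c| * |x|^3 + |d| * |x|^2) := by
        have he : |v t x| = |C t| * |c * x ^ 3 + d * x ^ 2| := by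
          rw [hvdef]; exact abs_mul _ _
        rw [he]
        have hb : |c * x ^ 3 + d * x ^ 2| ≤ |c| * |x|^3 + |d| * |x|^2 := by
          calc |c * x ^ 3 + d * x ^ 2| ≤ |c * x^3| + |d * x^2| := abs_add_le _ _
            _ = |c| * |x|^3 + |d| * |x|^2 := by rw [abs_mul, abs_mul, abs_pow, abs_pow]
        nlinarith [abs_nonneg (C t), hM' t ht, abs_nonneg (c * x^3 + d * x^2),
          abs_nonneg c, abs_nonneg d, abs_nonneg x, pow_nonneg (abs_nonneg x) 3,
          pow_nonneg (abs_nonneg x) 2]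
      have h2 : |c| * |x|^3 + |d| * |x|^2 ≤ 8 * (|c| + |d|) * |ρ|^2 := by
        have h3 : |x|^3 ≤ 8 * |ρ|^3 := by
          calc |x|^3 ≤ (2 * |ρ|)^3 := pow_le_pow_left₀ (abs_nonneg x) hx2 3
            _ = 8 * |ρ|^3 := by ring
        have h4 : |x|^2 ≤ 4 * |ρ|^2 := by
          calc |x|^2 ≤ (2 * |ρ|)^2 := pow_le_pow_left₀ (abs_nonneg x) hx2 2
            _ = 4 * |ρ|^2 := by ring
        have h5 : |ρ|^3 ≤ |ρ|^2 := by nlinarith [abs_nonneg ρ]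
        nlinarith [abs_nonneg c, abs_nonneg d, abs_nonneg ρ]
      calc |v t x| ≤ M * (|c| * |x|^3 + |d| * |x|^2) := h1
        _ ≤ M * (8 * (|c| + |d|) * |ρ|^2) := mul_le_mul_of_nonneg_left h2 hM0
        _ = |ρ|^2 * (8 * M * (|c| + |d|)) := by ring
        _ ≤ |ρ|^2 * K := by
            apply mul_le_mul_of_nonneg_left _ (by positivity)
            rw [hKdef]; linarith
        _ = |ρ| * (|ρ| * K) := by ring
        _ ≤ |ρ| * 1 := mul_le_mul_of_nonneg_left hρK (abs_nonneg ρ)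
        _ = |ρ| := mul_one _
    · show |ρ| * max ((1:ℝ) - 0) ((0:ℝ) - 0) ≤ |ρ| - 0
      have hmax : max ((1:ℝ) - 0) ((0:ℝ) - 0) = 1 := by norm_num
      rw [hmax, mul_one, sub_zero]
  obtain ⟨f, hf0, hfd⟩ : ∃ f : ℝ → ℝ, f 0 = ρ ∧ ∀ t ∈ Set.Icc (0:ℝ) 1,
      HasDerivWithinAt f (v t (f t)) (Set.Icc (0:ℝ) 1) t :=
    hpl.exists_eq_forall_mem_Icc_hasDerivWithinAt₀
  have hfsol : IsAbelSolution A B f := by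
    intro t ht
    have h1 := hfd t ht
    have he : A t * f t ^ 3 + B t * f t ^ 2 = v t (f t) := by
      rw [hvdef, hAC t ht, hBC t ht]; ring
    rw [he]
    exact h1
  have hfc : ContinuousOn f (Set.Icc (0:ℝ) 1) := fun t ht => (hfsol t ht).continuousWithinAt
  have hfne : ∀ t ∈ Set.Icc (0:ℝ) 1, f t ≠ 0 := by
    intro t ht
    have hpos := abel_never_zero hA hB hfsol (by rw [hf0]; exact hρ0) t ht
    intro h
    rw [h, mul_zero] at hpos
    exact lt_irrefl 0 hpos
  have hgne : ∀ t ∈ Set.Icc (0:ℝ) 1, c * f t + d ≠ 0 := by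
    by_cases hc : c = 0
    · have hd : d ≠ 0 := fun h => hcd ⟨hc, h⟩
      intro t ht
      rw [hc, zero_mul, zero_add]
      exact hd
    · by_cases hd : d = 0
      · intro t ht
        rw [hd, add_zero]
        exact mul_ne_zero hc (hfne t ht)
      · -- x* = -d/c is a constant solution avoided because |ρ| < |d|/(2|c|)
        intro t ht hzero
        have hxstar : f t = -d / c := by field_simp at hzero ⊢; linarith
        have hσ : IsAbelSolution A B (fun _ => -d / c) := by
          intro s hs
          have : A s * (-d / c) ^ 3 + B s * (-d / c) ^ 2 = 0 := by
            rw [hAC s hs, hBC s hs]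
            field_simp
            ring
          rw [this]
          exact hasDerivWithinAt_const s _ _
        have heq := abel_eqOn hA hB hfsol hσ ht hxstar
        have hf0' : f 0 = -d / c := heq (by norm_num)
        rw [hf0] at hf0'
        have he2 : ε₂ = |d| / (2 * |c|) := by
          rw [hε₂def, if_neg]
          push_neg
          exact ⟨hc, hd⟩
        rw [he2] at hρ2
        rw [hf0'] at hρ2
        have hcpos : 0 < |c| := abs_pos.mpr hc
        have habs2 : |(-d / c)| = |d| / |c| := by
          rw [abs_div, abs_neg]
        rw [habs2] at hρ2
        have : |d| / |c| < |d| / (2 * |c|) := hρ2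
        have hdpos : 0 < |d| := abs_pos.mpr hd
        rw [div_lt_div_iff₀ hcpos (by positivity)] at this
        nlinarith
  have hgprod : ∀ t ∈ Set.Icc (0:ℝ) 1, c * f t ^ 3 + d * f t ^ 2 ≠ 0 := by
    intro t ht
    have h1 : c * f t ^ 3 + d * f t ^ 2 = f t ^ 2 * (c * f t + d) := by ring
    rw [h1]
    exact mul_ne_zero (pow_ne_zero 2 (hfne t ht)) (hgne t ht)
  -- range of f
  obtain ⟨tm, htm, hmin⟩ := isCompact_Icc.exists_isMinOn (⟨0, by norm_num⟩ :
    (Set.Icc (0:ℝ) 1).Nonempty) hfc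
  obtain ⟨tM, htM, hmax⟩ := isCompact_Icc.exists_isMaxOn (⟨0, by norm_num⟩ :
    (Set.Icc (0:ℝ) 1).Nonempty) hfc
  have hmm : f tm ≤ f tM := hmin htM
  have hmem : ∀ t ∈ Set.Icc (0:ℝ) 1, f t ∈ Set.Icc (f tm) (f tM) :=
    fun t ht => ⟨hmin ht, hmax ht⟩
  have hrange : ∀ x ∈ Set.Icc (f tm) (f tM), ∃ s ∈ Set.Icc (0:ℝ) 1, f s = x := by
    intro x hx
    have hsub : Set.uIcc tm tM ⊆ Set.Icc (0:ℝ) 1 := by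
      rw [← Set.uIcc_of_le (by norm_num : (0:ℝ) ≤ 1)]
      exact Set.uIcc_subset_uIcc (by rwa [Set.uIcc_of_le (by norm_num : (0:ℝ) ≤ 1)])
        (by rwa [Set.uIcc_of_le (by norm_num : (0:ℝ) ≤ 1)])
    have hiv := intermediate_value_uIcc (hfc.mono hsub)
    have hx' : x ∈ Set.uIcc (f tm) (f tM) := by rwa [Set.uIcc_of_le hmm]
    obtain ⟨s, hs, hfs⟩ := hiv hx'
    exact ⟨s, hsub hs, hfs⟩
  set g : ℝ → ℝ := fun x => c * x ^ 3 + d * x ^ 2 with hgdef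
  have hgJ : ∀ x ∈ Set.Icc (f tm) (f tM), g x ≠ 0 := by
    intro x hx
    obtain ⟨s, hs, rfl⟩ := hrange x hx
    exact hgprod s hs
  have hgcont : Continuous g := by
    rw [hgdef]
    exact ((continuous_const.mul (continuous_pow 3)).add
      (continuous_const.mul (continuous_pow 2)))
  set cl : ℝ → ℝ := fun x => max (f tm) (min (f tM) x) with hcldef
  have hclcont : Continuous cl := continuous_const.max (continuous_const.min continuous_id)
  have hclmem : ∀ x, cl x ∈ Set.Icc (f tm) (f tM) := by
    intro x
    constructor
    · exact le_max_left _ _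
    · rw [hcldef]
      simp only [max_le_iff]
      exact ⟨hmm, min_le_left _ _⟩
  have hclfix : ∀ x ∈ Set.Icc (f tm) (f tM), cl x = x := by
    intro x hx
    rw [hcldef]
    simp only [min_eq_right hx.2, max_eq_right hx.1]
  set W : ℝ → ℝ := fun x => (g (cl x))⁻¹ with hWdef
  have hWcont : Continuous W := (hgcont.comp hclcont).inv₀ (fun x => hgJ _ (hclmem x))
  set H : ℝ → ℝ := fun x => ∫ s in (f tm)..x, W s with hHdef
  have hH : ∀ x, HasDerivAt H (W x) x := fun x =>
    intervalIntegral.integral_hasDerivAt_right (hWcont.intervalIntegrable _ _)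
      (hWcont.stronglyMeasurableAtFilter _ _) hWcont.continuousAt
  have hΨ : ∀ t ∈ Set.Icc (0:ℝ) 1,
      HasDerivWithinAt (fun s => H (f s)) (C t) (Set.Icc (0:ℝ) 1) t := by
    intro t ht
    have h1 := (hH (f t)).comp_hasDerivWithinAt t (hfd t ht)
    refine h1.congr_deriv (Eq.symm ?_)
    have hclf : cl (f t) = f t := hclfix _ (hmem t ht)
    show C t = W (f t) * v t (f t)
    rw [hWdef]
    simp only [hclf]
    rw [hvdef, hgdef]
    have := hgprod t ht
    field_simp
    rw [mul_assoc, mul_div_assoc, div_self (mul_ne_zero (hfne t ht) (hgne t ht)), mul_one]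
  have hper : H (f 1) = H (f 0) := by
    have hΨint := ftc01 (Φ := fun s => H (f s)) (u := C) hC.continuousOn hΨ
    rw [hint] at hΨint
    have := hΨint.symm
    linarith [hΨint]
  have hsgn : (∀ x, 0 < W x) ∨ (∀ x, W x < 0) := by
    have hglo : g (f tm) ≠ 0 := hgJ _ ⟨le_refl _, hmm⟩
    have hsame : ∀ x ∈ Set.Icc (f tm) (f tM), 0 < g (f tm) * g x := by
      intro x hx
      rcases lt_trichotomy (g (f tm) * g x) 0 with h | h | h
      · exfalso
        have hsub2 : Set.uIcc (f tm) x ⊆ Set.Icc (f tm) (f tM) := by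
          rw [Set.uIcc_of_le hx.1]
          exact Set.Icc_subset_Icc le_rfl hx.2
        have hiv := intermediate_value_uIcc (hgcont.continuousOn.mono hsub2)
        have h0 : (0:ℝ) ∈ Set.uIcc (g (f tm)) (g x) := by
          rcases mul_neg_iff.mp h with ⟨hp, hn⟩ | ⟨hn, hp⟩
          · exact Set.mem_uIcc.mpr (Or.inr ⟨le_of_lt hn, le_of_lt hp⟩)
          · exact Set.mem_uIcc.mpr (Or.inl ⟨le_of_lt hn, le_of_lt hp⟩)
        obtain ⟨z, hz, hgz⟩ := hiv h0
        exact hgJ z (hsub2 hz) hgz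
      · exfalso
        rcases mul_eq_zero.mp h with h' | h'
        · exact hglo h'
        · exact hgJ x hx h'
      · exact h
    rcases lt_or_gt_of_ne hglo with hneg | hpos
    · right
      intro x
      have := hsame _ (hclmem x)
      have hgx : g (cl x) < 0 := by
        by_contra hcon
        push_neg at hcon
        have := mul_nonpos_of_nonpos_of_nonneg (le_of_lt hneg) hcon
        linarith
      rw [hWdef]
      exact inv_lt_zero.mpr hgx
    · left
      intro x
      have := hsame _ (hclmem x)
      have hgx : 0 < g (cl x) := by
        by_contra hcon
        push_neg at hcon
        have := mul_nonpos_of_nonneg_of_nonpos (le_of_lt hpos) hcon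
        linarith
      rw [hWdef]
      exact inv_pos.mpr hgx
  have hf01 : f 0 = f 1 := by
    rcases hsgn with hp | hn
    · have hm : StrictMono H := strictMono_of_hasDerivAt_pos hH hp
      exact hm.injective hper.symm
    · have hm : StrictMono (fun x => -H x) :=
        strictMono_of_hasDerivAt_pos (fun x => (hH x).neg) (fun x => by linarith [hn x])
      have := hm.injective (show -H (f 0) = -H (f 1) by rw [hper])
      exact this
  exact ⟨f, hfsol, hf0, hf01⟩

lemma binom_sign (c e : ℝ) (m : ℕ)
    (h : e = 0 ∨ c / e ∉ Set.Ioo (-1:ℝ) 0) :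
    (∀ t ∈ Set.Icc (0:ℝ) 1, 0 ≤ c + e * t ^ m) ∨
    (∀ t ∈ Set.Icc (0:ℝ) 1, c + e * t ^ m ≤ 0) := by
  by_cases he : e = 0
  · subst he
    rcases le_total 0 c with hc | hc
    · left; intro t _; simpa using hc
    · right; intro t _; simpa using hc
  have hr : c / e ∉ Set.Ioo (-1:ℝ) 0 := h.resolve_left he
  have hce : c = e * (c / e) := by field_simp
  have hcases : c / e ≤ -1 ∨ 0 ≤ c / e := by
    rcases le_or_gt (c / e) (-1) with h1 | h1
    · exact Or.inl h1
    · rcases le_or_gt 0 (c / e) with h2 | h2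
      · exact Or.inr h2
      · exact absurd ⟨h1, h2⟩ hr
  have htm : ∀ t ∈ Set.Icc (0:ℝ) 1, 0 ≤ t ^ m ∧ t ^ m ≤ 1 := by
    intro t ht
    exact ⟨pow_nonneg ht.1 m, pow_le_one₀ ht.1 ht.2⟩
  rcases hcases with hle | hge
  · -- c/e ≤ -1 : c + e t^m = e (c/e + t^m), factor ≤ 0
    rcases le_total 0 e with hepos | heneg
    · right
      intro t ht
      obtain ⟨h0, h1⟩ := htm t ht
      have : c / e + t ^ m ≤ 0 := by linarith
      nlinarith
    · left
      intro t ht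
      obtain ⟨h0, h1⟩ := htm t ht
      have : c / e + t ^ m ≤ 0 := by linarith
      nlinarith
  · rcases le_total 0 e with hepos | heneg
    · left
      intro t ht
      obtain ⟨h0, h1⟩ := htm t ht
      have : 0 ≤ c / e + t ^ m := by linarith
      nlinarith
    · right
      intro t ht
      obtain ⟨h0, h1⟩ := htm t ht
      have : 0 ≤ c / e + t ^ m := by linarith
      nlinarith

lemma single_sign (e : ℝ) (m : ℕ) :
    (∀ t ∈ Set.Icc (0:ℝ) 1, 0 ≤ e * t ^ m) ∨
    (∀ t ∈ Set.Icc (0:ℝ) 1, e * t ^ m ≤ 0) := by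
  rcases le_total 0 e with he | he
  · left; intro t ht; exact mul_nonneg he (pow_nonneg ht.1 m)
  · right; intro t ht; exact mul_nonpos_of_nonpos_of_nonneg he (pow_nonneg ht.1 m)

lemma exists_sign_pair (j k : ℕ) (hj : 0 < j) (hjk : j < k)
    (a₀ a₁ a₂ b₀ b₁ b₂ : ℝ) (A B : ℝ → ℝ)
    (hA : A = fun t => a₀ + a₁ * t ^ j + a₂ * t ^ k)
    (hB : B = fun t => b₀ + b₁ * t ^ j + b₂ * t ^ k)
    (h_cond :
      (a₂ * b₁ - a₁ * b₂ = 0 ∨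
        (a₂ * b₀ - a₀ * b₂) / (a₂ * b₁ - a₁ * b₂) ∉ Set.Ioo (-1 : ℝ) 0) ∨
      (a₁ * b₂ - a₂ * b₁ = 0 ∨
        (a₁ * b₀ - a₀ * b₁) / (a₁ * b₂ - a₂ * b₁) ∉ Set.Ioo (-1 : ℝ) 0) ∨
      (a₀ * b₂ - a₂ * b₀ = 0 ∨
        (a₀ * b₁ - a₁ * b₀) / (a₀ * b₂ - a₂ * b₀) ∉ Set.Ioo (-1 : ℝ) 0)) :
    ∃ α β : ℝ, (α ≠ 0 ∨ β ≠ 0) ∧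
      ((∀ t ∈ Set.Icc (0:ℝ) 1, 0 ≤ α * A t + β * B t) ∨
       (∀ t ∈ Set.Icc (0:ℝ) 1, α * A t + β * B t ≤ 0)) := by
  subst hA hB
  -- helper: conclusion for a constant combination
  have hconstsign : ∀ α β : ℝ, (∀ t : ℝ, α * (a₀ + a₁ * t ^ j + a₂ * t ^ k)
        + β * (b₀ + b₁ * t ^ j + b₂ * t ^ k) = α * a₀ + β * b₀) →
      ((∀ t ∈ Set.Icc (0:ℝ) 1, 0 ≤ α * (a₀ + a₁ * t ^ j + a₂ * t ^ k)
          + β * (b₀ + b₁ * t ^ j + b₂ * t ^ k)) ∨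
       (∀ t ∈ Set.Icc (0:ℝ) 1, α * (a₀ + a₁ * t ^ j + a₂ * t ^ k)
          + β * (b₀ + b₁ * t ^ j + b₂ * t ^ k) ≤ 0)) := by
    intro α β hc
    rcases le_total 0 (α * a₀ + β * b₀) with hs | hs
    · left; intro t _; rw [hc t]; exact hs
    · right; intro t _; rw [hc t]; exact hs
  -- degenerate fallbacks first
  by_cases h2z : a₂ = 0 ∧ b₂ = 0
  · by_cases h1z : a₁ = 0 ∧ b₁ = 0
    · refine ⟨0, 1, Or.inr one_ne_zero, ?_⟩
      apply hconstsign
      intro t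
      rw [h2z.1, h2z.2, h1z.1, h1z.2]
      ring
    · refine ⟨b₁, -a₁, ?_, ?_⟩
      · rcases not_and_or.mp h1z with h | h
        · exact Or.inr (by simpa using h)
        · exact Or.inl h
      · apply hconstsign
        intro t
        rw [h2z.1, h2z.2]
        ring
  · by_cases h1z : a₁ = 0 ∧ b₁ = 0
    · -- a₁ = b₁ = 0 : use (b₂, -a₂), combination is c + e t^k with e = 0
      refine ⟨b₂, -a₂, ?_, ?_⟩
      · rcases not_and_or.mp h2z with h | h
        · exact Or.inr (by simpa using h)
        · exact Or.inl h
      · apply hconstsign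
        intro t
        rw [h1z.1, h1z.2]
        ring
    · -- main case analysis over h_cond
      rcases h_cond with h | h | h
      · -- pair (b₂, -a₂): combination = (b₂a₀ - a₂b₀) + (b₂a₁ - a₂b₁) t^j
        refine ⟨b₂, -a₂, ?_, ?_⟩
        · rcases not_and_or.mp h2z with hh | hh
          · exact Or.inr (by simpa using hh)
          · exact Or.inl hh
        · have hb := binom_sign (b₂ * a₀ - a₂ * b₀) (b₂ * a₁ - a₂ * b₁) j (by
            rcases h with h | h
            · left; linarith
            · right
              have : (b₂ * a₀ - a₂ * b₀) / (b₂ * a₁ - a₂ * b₁)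
                  = (a₂ * b₀ - a₀ * b₂) / (a₂ * b₁ - a₁ * b₂) := by
                rw [show b₂ * a₀ - a₂ * b₀ = -(a₂ * b₀ - a₀ * b₂) by ring,
                  show b₂ * a₁ - a₂ * b₁ = -(a₂ * b₁ - a₁ * b₂) by ring, neg_div_neg_eq]
              rwa [this])
          have heq : ∀ t : ℝ, b₂ * (a₀ + a₁ * t ^ j + a₂ * t ^ k)
              + (-a₂) * (b₀ + b₁ * t ^ j + b₂ * t ^ k)
              = (b₂ * a₀ - a₂ * b₀) + (b₂ * a₁ - a₂ * b₁) * t ^ j := by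
            intro t; ring
          rcases hb with hb | hb
          · left; intro t ht; rw [heq t]; exact hb t ht
          · right; intro t ht; rw [heq t]; exact hb t ht
      · -- pair (b₁, -a₁): combination = (b₁a₀ - a₁b₀) + (b₁a₂ - a₁b₂) t^k
        refine ⟨b₁, -a₁, ?_, ?_⟩
        · rcases not_and_or.mp h1z with hh | hh
          · exact Or.inr (by simpa using hh)
          · exact Or.inl hh
        · have hb := binom_sign (b₁ * a₀ - a₁ * b₀) (b₁ * a₂ - a₁ * b₂) k (by
            rcases h with h | h
            · left; linarith
            · right
              have : (b₁ * a₀ - a₁ * b₀) / (b₁ * a₂ - a₁ * b₂)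
                  = (a₁ * b₀ - a₀ * b₁) / (a₁ * b₂ - a₂ * b₁) := by
                rw [show b₁ * a₀ - a₁ * b₀ = -(a₁ * b₀ - a₀ * b₁) by ring,
                  show b₁ * a₂ - a₁ * b₂ = -(a₁ * b₂ - a₂ * b₁) by ring, neg_div_neg_eq]
              rwa [this])
          have heq : ∀ t : ℝ, b₁ * (a₀ + a₁ * t ^ j + a₂ * t ^ k)
              + (-a₁) * (b₀ + b₁ * t ^ j + b₂ * t ^ k)
              = (b₁ * a₀ - a₁ * b₀) + (b₁ * a₂ - a₁ * b₂) * t ^ k := by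
            intro t; ring
          rcases hb with hb | hb
          · left; intro t ht; rw [heq t]; exact hb t ht
          · right; intro t ht; rw [heq t]; exact hb t ht
      · -- pair (b₀, -a₀): combination = t^j ((b₀a₁ - a₀b₁) + (b₀a₂ - a₀b₂) t^(k-j))
        by_cases h0z : a₀ = 0 ∧ b₀ = 0
        · -- combination with (b₁, -a₁) is (b₁a₂ - a₁b₂) t^k
          refine ⟨b₁, -a₁, ?_, ?_⟩
          · rcases not_and_or.mp h1z with hh | hh
            · exact Or.inr (by simpa using hh)
            · exact Or.inl hh
          · have hb := single_sign (b₁ * a₂ - a₁ * b₂) k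
            have heq : ∀ t : ℝ, b₁ * (a₀ + a₁ * t ^ j + a₂ * t ^ k)
                + (-a₁) * (b₀ + b₁ * t ^ j + b₂ * t ^ k)
                = (b₁ * a₂ - a₁ * b₂) * t ^ k := by
              intro t; rw [h0z.1, h0z.2]; ring
            rcases hb with hb | hb
            · left; intro t ht; rw [heq t]; exact hb t ht
            · right; intro t ht; rw [heq t]; exact hb t ht
        · refine ⟨b₀, -a₀, ?_, ?_⟩
          · rcases not_and_or.mp h0z with hh | hh
            · exact Or.inr (by simpa using hh)
            · exact Or.inl hh
          · have hb := binom_sign (b₀ * a₁ - a₀ * b₁) (b₀ * a₂ - a₀ * b₂) (k - j) (by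
              rcases h with h | h
              · left; linarith
              · right
                have : (b₀ * a₁ - a₀ * b₁) / (b₀ * a₂ - a₀ * b₂)
                    = (a₀ * b₁ - a₁ * b₀) / (a₀ * b₂ - a₂ * b₀) := by
                  rw [show b₀ * a₁ - a₀ * b₁ = -(a₀ * b₁ - a₁ * b₀) by ring,
                    show b₀ * a₂ - a₀ * b₂ = -(a₀ * b₂ - a₂ * b₀) by ring, neg_div_neg_eq]
                rwa [this])
            have hpow : ∀ t : ℝ, t ^ k = t ^ j * t ^ (k - j) := by
              intro t
              rw [← pow_add]
              congr 1
              omega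
            have heq : ∀ t : ℝ, b₀ * (a₀ + a₁ * t ^ j + a₂ * t ^ k)
                + (-a₀) * (b₀ + b₁ * t ^ j + b₂ * t ^ k)
                = t ^ j * ((b₀ * a₁ - a₀ * b₁) + (b₀ * a₂ - a₀ * b₂) * t ^ (k - j)) := by
              intro t
              rw [hpow t]
              ring
            rcases hb with hb | hb
            · left
              intro t ht
              rw [heq t]
              exact mul_nonneg (pow_nonneg ht.1 j) (hb t ht)
            · right
              intro t ht
              rw [heq t]
              exact mul_nonpos_of_nonneg_of_nonpos (pow_nonneg ht.1 j) (hb t ht)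

/-- Scaled sign transfer. -/
lemma scale_sign {u : ℝ → ℝ} {α : ℝ} (hα : α ≠ 0)
    (hs : (∀ t ∈ Set.Icc (0:ℝ) 1, 0 ≤ α * u t) ∨ (∀ t ∈ Set.Icc (0:ℝ) 1, α * u t ≤ 0)) :
    (∀ t ∈ Set.Icc (0:ℝ) 1, 0 ≤ u t) ∨ (∀ t ∈ Set.Icc (0:ℝ) 1, u t ≤ 0) := by
  rcases lt_or_gt_of_ne hα with hneg | hpos
  · rcases hs with h | h
    · right; intro t ht; nlinarith [h t ht]
    · left; intro t ht; nlinarith [h t ht]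
  · rcases hs with h | h
    · left; intro t ht; nlinarith [h t ht]
    · right; intro t ht; nlinarith [h t ht]

theorem abel_main {A B : ℝ → ℝ} (hAc : Continuous A) (hBc : Continuous B)
    {α β : ℝ} (hpair : α ≠ 0 ∨ β ≠ 0)
    (hsign : (∀ t ∈ Set.Icc (0:ℝ) 1, 0 ≤ α * A t + β * B t) ∨
             (∀ t ∈ Set.Icc (0:ℝ) 1, α * A t + β * B t ≤ 0))
    (h_nocenter : ¬ HasCenterAtZero A B) :
    (∀ γ₁ γ₂ : ℝ → ℝ, IsPeriodicOrbit A B γ₁ → IsPeriodicOrbit A B γ₂ →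
      γ₁ 0 ≠ 0 → γ₂ 0 ≠ 0 → Set.EqOn γ₁ γ₂ (Set.Icc 0 1)) ∧
    (∀ γ : ℝ → ℝ, IsPeriodicOrbit A B γ → γ 0 ≠ 0 → IsHyperbolic A B γ) := by
  have hA := hAc.continuousOn (s := Set.Icc (0:ℝ) 1)
  have hB := hBc.continuousOn (s := Set.Icc (0:ℝ) 1)
  have h01 : (0:ℝ) ∈ Set.Icc (0:ℝ) 1 := by norm_num
  -- basic facts for nonzero periodic orbits
  have hbasic : ∀ γ : ℝ → ℝ, IsPeriodicOrbit A B γ → γ 0 ≠ 0 →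
      (∀ t ∈ Set.Icc (0:ℝ) 1, γ t ≠ 0) ∧ (∀ t ∈ Set.Icc (0:ℝ) 1, 0 < γ 0 * γ t) := by
    intro γ hγ h0
    have hs := abel_never_zero hA hB hγ.1 h0
    exact ⟨fun t ht h => by have := hs t ht; rw [h, mul_zero] at this; exact lt_irrefl 0 this, hs⟩
  by_cases hβ : β = 0
  · -- Case (a): A has constant sign
    have hα : α ≠ 0 := hpair.resolve_right (by simp [hβ])
    have hsA : (∀ t ∈ Set.Icc (0:ℝ) 1, 0 ≤ A t) ∨ (∀ t ∈ Set.Icc (0:ℝ) 1, A t ≤ 0) := by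
      apply scale_sign hα
      rcases hsign with h | h
      · left; intro t ht; have := h t ht; rw [hβ] at this; linarith
      · right; intro t ht; have := h t ht; rw [hβ] at this; linarith
    by_cases hAz : ∀ t ∈ Set.Icc (0:ℝ) 1, A t = 0
    · -- degenerate: A ≡ 0 ⟹ no nonzero periodic orbit
      have hnone : ∀ γ : ℝ → ℝ, IsPeriodicOrbit A B γ → γ 0 ≠ 0 → False := by
        intro γ hγ h0
        obtain ⟨hne, _⟩ := hbasic γ hγ h0
        have hid3 := int_id3 hA hB hγ.1 hγ.2 hne
        have hintB : ∫ t in (0:ℝ)..1, B t = 0 := by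
          have hcongr : (∫ t in (0:ℝ)..1, B t) = ∫ t in (0:ℝ)..1, (A t * γ t + B t) := by
            apply intervalIntegral.integral_congr
            intro t ht
            rw [Set.uIcc_of_le (by norm_num : (0:ℝ) ≤ 1)] at ht
            show B t = A t * γ t + B t
            rw [hAz t ht]
            ring
          rw [hcongr]
          exact hid3
        exact h_nocenter (abel_center (c := 0) (d := 1) hBc hA hB
          (fun t ht => by rw [hAz t ht]; ring) (fun t ht => by ring) hintB)
      exact ⟨fun γ₁ γ₂ h1 h2 hn1 hn2 => absurd (hnone γ₁ h1 hn1) not_false,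
        fun γ hγ h0 => absurd (hnone γ hγ h0) not_false⟩
    · push_neg at hAz
      obtain ⟨t₀, ht₀, hAt₀⟩ := hAz
      constructor
      · intro γ₁ γ₂ h1 h2 hn1 hn2
        by_cases heq0 : γ₁ 0 = γ₂ 0
        · exact abel_eqOn hA hB h1.1 h2.1 h01 heq0
        · exfalso
          obtain ⟨hne₁, _⟩ := hbasic γ₁ h1 hn1
          obtain ⟨hne₂, _⟩ := hbasic γ₂ h2 hn2
          have hδne : ∀ t ∈ Set.Icc (0:ℝ) 1, γ₂ t - γ₁ t ≠ 0 := by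
            intro t ht h
            have : γ₁ t = γ₂ t := by linarith [sub_eq_zero.mp h]
            exact heq0 (abel_eqOn hA hB h1.1 h2.1 ht this h01)
          have hδsgn := sign_const01 ((h2.1.contOn01).sub (h1.1.contOn01)) hδne
          have hid := int_id6' hA hB h1.1 h2.1 h1.2 h2.2 hne₁ hne₂
          exact integral_ne_zero01 (hA.mul ((h2.1.contOn01).sub (h1.1.contOn01)))
            (sign_mul01 hsA hδsgn) ht₀
            (mul_ne_zero hAt₀ (hδne t₀ ht₀)) hid
      · intro γ hγ h0
        obtain ⟨hne, _⟩ := hbasic γ hγ h0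
        have hw : ∀ t ∈ Set.Icc (0:ℝ) 1, 0 < γ 0 ^ 2 * γ t ^ 2 := by
          intro t ht
          have e0 := hne 0 h01
          have e1 := hne t ht
          positivity
        have hErepr := E_repr_a hA hB hγ.1 hγ.2 hne
        show (∫ t in (0:ℝ)..1, (3 * A t * γ t ^ 2 + 2 * B t * γ t)) ≠ 0
        rw [hErepr]
        exact integral_ne_zero01 (hA.mul ((hγ.1.contOn01).pow 2))
          (sign_mul01 (w := fun t => γ t ^ 2) hsA hw) ht₀
          (mul_ne_zero hAt₀ (pow_ne_zero 2 (hne t₀ ht₀)))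
  · by_cases hα : α = 0
    · -- Case (b): B has constant sign
      have hsB : (∀ t ∈ Set.Icc (0:ℝ) 1, 0 ≤ B t) ∨ (∀ t ∈ Set.Icc (0:ℝ) 1, B t ≤ 0) := by
        apply scale_sign hβ
        rcases hsign with h | h
        · left; intro t ht; have := h t ht; rw [hα] at this; linarith
        · right; intro t ht; have := h t ht; rw [hα] at this; linarith
      by_cases hBz : ∀ t ∈ Set.Icc (0:ℝ) 1, B t = 0
      · have hnone : ∀ γ : ℝ → ℝ, IsPeriodicOrbit A B γ → γ 0 ≠ 0 → False := by
          intro γ hγ h0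
          obtain ⟨hne, _⟩ := hbasic γ hγ h0
          have hid4 := int_id4 hA hB hγ.1 hγ.2 hne
          have hintA : ∫ t in (0:ℝ)..1, A t = 0 := by
            have hcongr : (∫ t in (0:ℝ)..1, A t)
                = ∫ t in (0:ℝ)..1, (A t + B t * (γ t)⁻¹) := by
              apply intervalIntegral.integral_congr
              intro t ht
              rw [Set.uIcc_of_le (by norm_num : (0:ℝ) ≤ 1)] at ht
              show A t = A t + B t * (γ t)⁻¹
              rw [hBz t ht]
              ring
            rw [hcongr]
            exact hid4
          exact h_nocenter (abel_center (c := 1) (d := 0) hAc hA hB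
            (fun t ht => by ring) (fun t ht => by rw [hBz t ht]; ring) hintA)
        exact ⟨fun γ₁ γ₂ h1 h2 hn1 hn2 => absurd (hnone γ₁ h1 hn1) not_false,
          fun γ hγ h0 => absurd (hnone γ hγ h0) not_false⟩
      · push_neg at hBz
        obtain ⟨t₀, ht₀, hBt₀⟩ := hBz
        constructor
        · intro γ₁ γ₂ h1 h2 hn1 hn2
          by_cases heq0 : γ₁ 0 = γ₂ 0
          · exact abel_eqOn hA hB h1.1 h2.1 h01 heq0
          · exfalso
            obtain ⟨hne₁, _⟩ := hbasic γ₁ h1 hn1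
            obtain ⟨hne₂, _⟩ := hbasic γ₂ h2 hn2
            have hδne : ∀ t ∈ Set.Icc (0:ℝ) 1, γ₂ t - γ₁ t ≠ 0 := by
              intro t ht h
              have : γ₁ t = γ₂ t := by linarith [sub_eq_zero.mp h]
              exact heq0 (abel_eqOn hA hB h1.1 h2.1 ht this h01)
            have hwcont : ContinuousOn (fun t => (γ₂ t - γ₁ t) / (γ₁ t * γ₂ t))
                (Set.Icc (0:ℝ) 1) :=
              ((h2.1.contOn01).sub (h1.1.contOn01)).div
                ((h1.1.contOn01).mul (h2.1.contOn01))
                (fun t ht => mul_ne_zero (hne₁ t ht) (hne₂ t ht))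
            have hwne : ∀ t ∈ Set.Icc (0:ℝ) 1, (γ₂ t - γ₁ t) / (γ₁ t * γ₂ t) ≠ 0 :=
              fun t ht => div_ne_zero (hδne t ht) (mul_ne_zero (hne₁ t ht) (hne₂ t ht))
            have hwsgn := sign_const01 hwcont hwne
            have hid := int_id7 hA hB h1.1 h2.1 h1.2 h2.2 hne₁ hne₂
            exact integral_ne_zero01 (hB.mul hwcont)
              (sign_mul01 (w := fun t => (γ₂ t - γ₁ t) / (γ₁ t * γ₂ t)) hsB hwsgn) ht₀
              (mul_ne_zero hBt₀ (hwne t₀ ht₀)) hid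
        · intro γ hγ h0
          obtain ⟨hne, hsgnγ⟩ := hbasic γ hγ h0
          show (∫ t in (0:ℝ)..1, (3 * A t * γ t ^ 2 + 2 * B t * γ t)) ≠ 0
          rw [E_repr_b hA hB hγ.1 hγ.2 hne]
          apply neg_ne_zero.mpr
          exact integral_ne_zero01 (hB.mul (hγ.1.contOn01))
            (sign_mul01 (w := γ) hsB hsgnγ) ht₀
            (mul_ne_zero hBt₀ (hne t₀ ht₀))
    · -- Case (c): line x₀ = α/β
      set x₀ : ℝ := α / β with hx₀def
      have hx₀ : x₀ ≠ 0 := div_ne_zero hα hβ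
      have hP : (∀ t ∈ Set.Icc (0:ℝ) 1, 0 ≤ A t * x₀ + B t) ∨
                (∀ t ∈ Set.Icc (0:ℝ) 1, A t * x₀ + B t ≤ 0) := by
        have hrw : ∀ t, A t * x₀ + B t = (α * A t + β * B t) / β := by
          intro t; rw [hx₀def]; field_simp
        rcases lt_or_gt_of_ne hβ with hbn | hbp
        · rcases hsign with h | h
          · right; intro t ht; rw [hrw t]
            exact div_nonpos_iff.mpr (Or.inl ⟨h t ht, le_of_lt hbn⟩)
          · left; intro t ht; rw [hrw t]
            exact div_nonneg_iff.mpr (Or.inr ⟨h t ht, le_of_lt hbn⟩)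
        · rcases hsign with h | h
          · left; intro t ht; rw [hrw t]
            exact div_nonneg (h t ht) (le_of_lt hbp)
          · right; intro t ht; rw [hrw t]
            exact div_nonpos_iff.mpr (Or.inr ⟨h t ht, le_of_lt hbp⟩)
      have hr3 : (∀ t ∈ Set.Icc (0:ℝ) 1, 0 ≤ A t * x₀ ^ 3 + B t * x₀ ^ 2) ∨
                 (∀ t ∈ Set.Icc (0:ℝ) 1, A t * x₀ ^ 3 + B t * x₀ ^ 2 ≤ 0) := by
        have hfac : ∀ t, A t * x₀ ^ 3 + B t * x₀ ^ 2 = x₀ ^ 2 * (A t * x₀ + B t) := by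
          intro t; ring
        rcases hP with h | h
        · left; intro t ht; rw [hfac t]; exact mul_nonneg (by positivity) (h t ht)
        · right; intro t ht; rw [hfac t]
          exact mul_nonpos_of_nonneg_of_nonpos (by positivity) (h t ht)
      by_cases hPz : ∀ t ∈ Set.Icc (0:ℝ) 1, A t * x₀ + B t = 0
      · -- proportional case
        have hprop : ∀ t ∈ Set.Icc (0:ℝ) 1, B t = -x₀ * A t := by
          intro t ht
          linear_combination hPz t ht
        have hconstσ : IsAbelSolution A B (fun _ => x₀) := by
          intro t ht
          show HasDerivWithinAt (fun _ => x₀) (A t * x₀ ^ 3 + B t * x₀ ^ 2)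
            (Set.Icc (0:ℝ) 1) t
          have hz : A t * x₀ ^ 3 + B t * x₀ ^ 2 = 0 := by
            linear_combination x₀ ^ 2 * hPz t ht
          rw [hz]
          exact hasDerivWithinAt_const t _ x₀
        by_cases hIA : (∫ t in (0:ℝ)..1, A t) = 0
        · exact absurd (abel_center (c := 1) (d := -x₀) hAc hA hB
            (fun t ht => by ring) hprop hIA) h_nocenter
        · have hallx₀ : ∀ γ : ℝ → ℝ, IsPeriodicOrbit A B γ → γ 0 ≠ 0 →
              ∀ t ∈ Set.Icc (0:ℝ) 1, γ t = x₀ := by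
            intro γ hγ h0
            obtain ⟨hne, _⟩ := hbasic γ hγ h0
            by_cases hhit : ∃ t ∈ Set.Icc (0:ℝ) 1, γ t = x₀
            · obtain ⟨s, hs, hγs⟩ := hhit
              exact abel_eqOn hA hB hγ.1 hconstσ hs hγs
            · push_neg at hhit
              exact absurd (int_id8 hA hB hγ.1 hγ.2 hx₀ hprop hne
                (fun t ht => sub_ne_zero.mpr (hhit t ht))) hIA
          constructor
          · intro γ₁ γ₂ h1 h2 hn1 hn2 t ht
            rw [hallx₀ γ₁ h1 hn1 t ht, hallx₀ γ₂ h2 hn2 t ht]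
          · intro γ hγ h0
            have hall := hallx₀ γ hγ h0
            show (∫ t in (0:ℝ)..1, (3 * A t * γ t ^ 2 + 2 * B t * γ t)) ≠ 0
            have hcongr : ∫ t in (0:ℝ)..1, (3 * A t * γ t ^ 2 + 2 * B t * γ t)
                = ∫ t in (0:ℝ)..1, x₀ ^ 2 * A t := by
              apply intervalIntegral.integral_congr
              intro t ht
              rw [Set.uIcc_of_le (by norm_num : (0:ℝ) ≤ 1)] at ht
              show 3 * A t * γ t ^ 2 + 2 * B t * γ t = x₀ ^ 2 * A t
              rw [hall t ht, hprop t ht]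
              ring
            rw [hcongr, intervalIntegral.integral_const_mul]
            exact mul_ne_zero (pow_ne_zero 2 hx₀) hIA
      · push_neg at hPz
        obtain ⟨t₀, ht₀, hPt₀⟩ := hPz
        have hstrict : ∀ γ : ℝ → ℝ, IsPeriodicOrbit A B γ → γ 0 ≠ 0 →
            ∀ t ∈ Set.Icc (0:ℝ) 1, 0 < (γ 0 - x₀) * (γ t - x₀) := by
          intro γ hγ h0
          rcases abel_side hA hB hγ.1 hγ.2 hr3 with hflat | hstr
          · exfalso
            have hder : ∀ t ∈ Set.Ioo (0:ℝ) 1, A t * x₀ + B t = 0 := by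
              intro t ht
              have h1 : HasDerivAt γ (A t * γ t ^ 3 + B t * γ t ^ 2) t :=
                (hγ.1 t (Set.Ioo_subset_Icc_self ht)).hasDerivAt
                  (Icc_mem_nhds ht.1 ht.2)
              have hev : γ =ᶠ[nhds t] fun _ => x₀ := by
                filter_upwards [Icc_mem_nhds ht.1 ht.2] with s hs
                exact hflat s hs
              have h2 : HasDerivAt γ 0 t :=
                (hasDerivAt_const t x₀).congr_of_eventuallyEq hev
              have h3 := h1.unique h2
              have h4 : γ t = x₀ := hflat t (Set.Ioo_subset_Icc_self ht)
              rw [h4] at h3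
              have h5 : x₀ ^ 2 * (A t * x₀ + B t) = 0 := by linear_combination h3
              rcases mul_eq_zero.mp h5 with h | h
              · exact absurd h (pow_ne_zero 2 hx₀)
              · exact h
            have hcl : Set.EqOn (fun t => A t * x₀ + B t) (fun _ => (0:ℝ))
                (Set.Icc (0:ℝ) 1) := by
              have h1 : Set.EqOn (fun t => A t * x₀ + B t) (fun _ => (0:ℝ))
                  (Set.Ioo (0:ℝ) 1) := fun t ht => hder t ht
              have h2 := h1.closure ((hAc.mul continuous_const).add hBc) continuous_const
              rwa [closure_Ioo (by norm_num : (0:ℝ) ≠ 1)] at h2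
            exact hPt₀ (hcl ht₀)
          · exact hstr
        have hmeof : ∀ γ : ℝ → ℝ, IsPeriodicOrbit A B γ → γ 0 ≠ 0 →
            ∀ t ∈ Set.Icc (0:ℝ) 1, γ t - x₀ ≠ 0 := by
          intro γ hγ h0 t ht h
          have := hstrict γ hγ h0 t ht
          rw [h, mul_zero] at this
          exact lt_irrefl 0 this
        constructor
        · intro γ₁ γ₂ h1 h2 hn1 hn2
          by_cases heq0 : γ₁ 0 = γ₂ 0
          · exact abel_eqOn hA hB h1.1 h2.1 h01 heq0
          · exfalso
            obtain ⟨hne₁, _⟩ := hbasic γ₁ h1 hn1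
            obtain ⟨hne₂, _⟩ := hbasic γ₂ h2 hn2
            have hme₁ := hmeof γ₁ h1 hn1
            have hme₂ := hmeof γ₂ h2 hn2
            have hδne : ∀ t ∈ Set.Icc (0:ℝ) 1, γ₂ t - γ₁ t ≠ 0 := by
              intro t ht h
              have : γ₁ t = γ₂ t := by linarith [sub_eq_zero.mp h]
              exact heq0 (abel_eqOn hA hB h1.1 h2.1 ht this h01)
            have hwcont : ContinuousOn
                (fun t => x₀ ^ 2 * (γ₂ t - γ₁ t) / ((γ₁ t - x₀) * (γ₂ t - x₀)))
                (Set.Icc (0:ℝ) 1) :=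
              (continuousOn_const.mul ((h2.1.contOn01).sub (h1.1.contOn01))).div
                (((h1.1.contOn01).sub continuousOn_const).mul
                  ((h2.1.contOn01).sub continuousOn_const))
                (fun t ht => mul_ne_zero (hme₁ t ht) (hme₂ t ht))
            have hwne : ∀ t ∈ Set.Icc (0:ℝ) 1,
                x₀ ^ 2 * (γ₂ t - γ₁ t) / ((γ₁ t - x₀) * (γ₂ t - x₀)) ≠ 0 :=
              fun t ht => div_ne_zero
                (mul_ne_zero (pow_ne_zero 2 hx₀) (hδne t ht))
                (mul_ne_zero (hme₁ t ht) (hme₂ t ht))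
            have hwsgn := sign_const01 hwcont hwne
            have hid := int_id6 hA hB h1.1 h2.1 h1.2 h2.2 hne₁ hne₂ hme₁ hme₂
            exact integral_ne_zero01 (((hA.mul continuousOn_const).add hB).mul hwcont)
              (sign_mul01
                (w := fun t => x₀ ^ 2 * (γ₂ t - γ₁ t) / ((γ₁ t - x₀) * (γ₂ t - x₀)))
                hP hwsgn) ht₀
              (mul_ne_zero hPt₀ (hwne t₀ ht₀)) hid
        · intro γ hγ h0
          obtain ⟨hne, _⟩ := hbasic γ hγ h0
          have hme := hmeof γ hγ h0
          show (∫ t in (0:ℝ)..1, (3 * A t * γ t ^ 2 + 2 * B t * γ t)) ≠ 0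
          rw [E_repr_c hA hB hγ.1 hγ.2 hne hme]
          apply neg_ne_zero.mpr
          have hwcont : ContinuousOn (fun t => γ t ^ 2 / (γ t - x₀))
              (Set.Icc (0:ℝ) 1) :=
            ((hγ.1.contOn01).pow 2).div ((hγ.1.contOn01).sub continuousOn_const) hme
          have hwne : ∀ t ∈ Set.Icc (0:ℝ) 1, γ t ^ 2 / (γ t - x₀) ≠ 0 :=
            fun t ht => div_ne_zero (pow_ne_zero 2 (hne t ht)) (hme t ht)
          have hwsgn := sign_const01 hwcont hwne
          exact integral_ne_zero01 (((hA.mul continuousOn_const).add hB).mul hwcont)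
            (sign_mul01 (w := fun t => γ t ^ 2 / (γ t - x₀)) hP hwsgn) ht₀
            (mul_ne_zero hPt₀ (hwne t₀ ht₀))

end AbelAux

theorem polynomial_abel_uniqueness
    (j k : ℕ) (hj : 0 < j) (hjk : j < k)
    (a₀ a₁ a₂ b₀ b₁ b₂ : ℝ)
    (A B : ℝ → ℝ)
    (hA : A = fun t => a₀ + a₁ * t ^ j + a₂ * t ^ k)
    (hB : B = fun t => b₀ + b₁ * t ^ j + b₂ * t ^ k)
    (h_nocenter : ¬ HasCenterAtZero A B)
    (h_cond :
      (a₂ * b₁ - a₁ * b₂ = 0 ∨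
        (a₂ * b₀ - a₀ * b₂) / (a₂ * b₁ - a₁ * b₂) ∉ Set.Ioo (-1 : ℝ) 0) ∨
      (a₁ * b₂ - a₂ * b₁ = 0 ∨
        (a₁ * b₀ - a₀ * b₁) / (a₁ * b₂ - a₂ * b₁) ∉ Set.Ioo (-1 : ℝ) 0) ∨
      (a₀ * b₂ - a₂ * b₀ = 0 ∨
        (a₀ * b₁ - a₁ * b₀) / (a₀ * b₂ - a₂ * b₀) ∉ Set.Ioo (-1 : ℝ) 0)) :
    (∀ γ₁ γ₂ : ℝ → ℝ, IsPeriodicOrbit A B γ₁ → IsPeriodicOrbit A B γ₂ →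
      γ₁ 0 ≠ 0 → γ₂ 0 ≠ 0 → Set.EqOn γ₁ γ₂ (Set.Icc 0 1)) ∧
    (∀ γ : ℝ → ℝ, IsPeriodicOrbit A B γ → γ 0 ≠ 0 → IsHyperbolic A B γ) := by
  obtain ⟨α, β, hpair, hsign⟩ :=
    exists_sign_pair j k hj hjk a₀ a₁ a₂ b₀ b₁ b₂ A B hA hB h_cond
  have hAc : Continuous A := by
    rw [hA]
    exact (continuous_const.add (continuous_const.mul (continuous_pow j))).add
      (continuous_const.mul (continuous_pow k))
  have hBc : Continuous B := by
    rw [hB]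
    exact (continuous_const.add (continuous_const.mul (continuous_pow j))).add
      (continuous_const.mul (continuous_pow k))
  exact abel_main hAc hBc hpair hsign h_nocenter
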